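/- Let f = x_0^2 + x_1^3·x_5 + x_2^7·x_4 + x_2·x_3^{37} + x_1·x_4^{893} + x_3·x_5^{904149} ∈ ℂ[x_0, …, x_5]. If a point x ∈ ℂ^6 satisfies ∂f/∂x_i(x) = 0 for all i = 0, …, 5, then x = 0. (Hence the hypersurface {f = 0} of degree 925594 in ℙ(462797, 308531, 132129, 21445, 691, 1) is quasismooth.) -/
import Mathlib


open MvPolynomial

/-- The only common zero of the partial derivatives of
`f = x₀² + x₁³x₅ + x₂⁷x₄ + x₂x₃³⁷ + x₁x₄⁸⁹³ + x₃x₅⁹⁰⁴¹⁴⁹` is the origin; hence the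
degree-925594 hypersurface `{f = 0} ⊂ ℙ(462797,308531,132129,21445,691,1)` is
quasismooth. -/
theorem dim4_example_quasismooth
    (f : MvPolynomial (Fin 6) ℂ)
    (hf : f = X 0 ^ 2 + X 1 ^ 3 * X 5 + X 2 ^ 7 * X 4 + X 2 * X 3 ^ 37 +
      X 1 * X 4 ^ 893 + X 3 * X 5 ^ 904149) :
    ∀ x : Fin 6 → ℂ, (∀ i, MvPolynomial.eval x (MvPolynomial.pderiv i f) = 0) →
      x = 0 := by
  intro x hx
  have h0 := hx 0
  have h1 := hx 1
  have h2 := hx 2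
  have h3 := hx 3
  have h4 := hx 4
  have h5 := hx 5
  simp only [hf, map_add, pderiv_mul, pderiv_pow, pderiv_X, map_mul, map_pow,
    Pi.single_apply, Fin.reduceEq, if_true, if_false, map_one, map_zero, eval_X,
    mul_one, mul_zero, zero_mul, one_mul, add_zero, zero_add, map_natCast,
    Nat.cast_ofNat] at h0 h1 h2 h3 h4 h5
  norm_num at h0 h1 h2 h3 h4 h5
  -- abbreviations
  set a := x 1 with ha'
  set b := x 2 with hb'
  set c := x 3 with hc'
  set d := x 4 with hd'
  set e := x 5 with he'
  -- key monomial identity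
  have e1 : d ^ 893 = -(3 * a ^ 2 * e) := by linear_combination h1
  have e2 : c ^ 37 = -(7 * b ^ 6 * d) := by linear_combination h2
  have e3 : e ^ 904149 = -(37 * b * c ^ 36) := by linear_combination h3
  have e4 : b ^ 7 = -(893 * a * d ^ 892) := by linear_combination h4
  have e5 : a ^ 3 = -(904149 * c * e ^ 904148) := by linear_combination h5
  have key : a ^ 3 * b ^ 7 * c ^ 36 * d * e = 0 := by
    have step : a ^ 3 * b ^ 7 * (c ^ 36 * d * e)
        = (893 * 904149) * (a * (c ^ 37) * (d ^ 893) * (e ^ 904149)) := by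
      rw [e4, e5]; ring
    rw [e1, e2, e3] at step
    have : (1 + 777 * (893 * 904149)) * (a ^ 3 * b ^ 7 * c ^ 36 * d * e) = 0 := by
      linear_combination step
    have hne : (1 + 777 * (893 * 904149) : ℂ) ≠ 0 := by norm_num
    exact (mul_eq_zero.mp this).resolve_left hne
  -- from the monomial being zero, some coordinate vanishes, and then all cascade
  have habcde : a = 0 ∧ b = 0 ∧ c = 0 ∧ d = 0 ∧ e = 0 := by
    have := key
    simp only [mul_eq_zero, pow_eq_zero_iff, ne_eq, OfNat.ofNat_ne_zero,
      not_false_eq_true] at this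
    have cascade_a : a = 0 → a = 0 ∧ b = 0 ∧ c = 0 ∧ d = 0 ∧ e = 0 := by
      intro haz
      have hb : b = 0 := by
        have : b ^ 7 = 0 := by rw [e4, haz]; ring
        exact pow_eq_zero_iff (by norm_num) |>.mp this
      have hc : c = 0 := by
        have : c ^ 37 = 0 := by rw [e2, hb]; ring
        exact pow_eq_zero_iff (by norm_num) |>.mp this
      have he : e = 0 := by
        have : e ^ 904149 = 0 := by rw [e3, hb]; ring
        exact pow_eq_zero_iff (by norm_num) |>.mp this
      have hd : d = 0 := by
        have : d ^ 893 = 0 := by rw [e1, haz]; ring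
        exact pow_eq_zero_iff (by norm_num) |>.mp this
      exact ⟨haz, hb, hc, hd, he⟩
    have cascade_c : c = 0 → a = 0 ∧ b = 0 ∧ c = 0 ∧ d = 0 ∧ e = 0 := by
      intro hcz
      have he : e = 0 := by
        have : e ^ 904149 = 0 := by
          rw [e3]
          have : c ^ 36 = 0 := pow_eq_zero_iff (by norm_num) |>.mpr hcz
          rw [this]; ring
        exact pow_eq_zero_iff (by norm_num) |>.mp this
      have haz : a = 0 := by
        have : a ^ 3 = 0 := by rw [e5, hcz]; ring
        exact pow_eq_zero_iff (by norm_num) |>.mp this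
      exact cascade_a haz
    have cascade_b : b = 0 → a = 0 ∧ b = 0 ∧ c = 0 ∧ d = 0 ∧ e = 0 := by
      intro hbz
      have hc : c = 0 := by
        have : c ^ 37 = 0 := by rw [e2, hbz]; ring
        exact pow_eq_zero_iff (by norm_num) |>.mp this
      exact cascade_c hc
    have cascade_e : e = 0 → a = 0 ∧ b = 0 ∧ c = 0 ∧ d = 0 ∧ e = 0 := by
      intro hez
      have haz : a = 0 := by
        have : a ^ 3 = 0 := by
          rw [e5]
          have : e ^ 904148 = 0 := pow_eq_zero_iff (by norm_num) |>.mpr hez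
          rw [this]; ring
        exact pow_eq_zero_iff (by norm_num) |>.mp this
      exact cascade_a haz
    have cascade_d : d = 0 → a = 0 ∧ b = 0 ∧ c = 0 ∧ d = 0 ∧ e = 0 := by
      intro hdz
      have hb : b = 0 := by
        have : b ^ 7 = 0 := by
          rw [e4]
          have : d ^ 892 = 0 := pow_eq_zero_iff (by norm_num) |>.mpr hdz
          rw [this]; ring
        exact pow_eq_zero_iff (by norm_num) |>.mp this
      exact cascade_b hb
    rcases this with (((ha | hb) | hc) | hd) | he
    · exact cascade_a ha
    · exact cascade_b hb
    · exact cascade_c hc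
    · exact cascade_d hd
    · exact cascade_e he
  obtain ⟨ha0, hb0, hc0, hd0, he0⟩ := habcde
  have hx0 : x 0 = 0 := by linear_combination h0
  funext i
  fin_cases i <;> simp_all
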